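/- Let f : A ⥤ B be a functor, let (d₁, E₁, c₁) be any span from X to Z, and let (d₂, E₂, c₂) be a two-sided discrete fibration from A × X to B × Z. Let f/B denote the comma category Comma f (𝟭 B) with projections p to A and q to B, and let i_f : A ⥤ f/B be the functor a ↦ (a, f.obj a, identity). Consider the span (f/B) × E₁ from A × X to B × Z with head (f/B) × E₁, left leg p × d₁ and right leg q × c₁, and the span f × E₁ with head A × E₁, left leg 𝟭_A × d₁ and right leg f × c₁. Then composition with the span morphism i_f × 𝟭_{E₁} : A × E₁ ⥤ (f/B) × E₁ is a bijection from the set of span morphisms (f/B) × E₁ → E₂ to the set of span morphisms f × E₁ → E₂. -/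

import Mathlib

open CategoryTheory

universe w v v₁ v₂ v₃ v₄ v₅ u u₁ u₂ u₃ u₄ u₅

/-- A morphism is "an identity" when it is an `eqToHom` of an equality of objects. -/
def IsIdentityHom {C : Type u₁} [Category.{v₁} C] {x y : C} (φ : x ⟶ y) : Prop :=
  ∃ h : x = y, φ = eqToHom h

/-- A span of functors `A ⟵d E ⟶c B` is a two-sided discrete fibration from `A` to `B`:
(i) every `φ : a ⟶ d.obj e` has a unique lift with codomain `e` which is sent by `c` to an
identity; (ii) every `ψ : c.obj e ⟶ b` has a unique lift with domain `e` which is sent by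
`d` to an identity; (iii) every morphism of `E` factors as a morphism sent by `d` to an
identity followed by a morphism sent by `c` to an identity (whence, by (i) and (ii), it is
the lift of its `c`-image followed by the lift of its `d`-image). -/
structure IsTwoSidedDiscreteFibration {A : Type u₁} {E : Type u₂} {B : Type u₃}
    [Category.{v₁} A] [Category.{v₂} E] [Category.{v₃} B]
    (d : E ⥤ A) (c : E ⥤ B) : Prop where
  lift_left : ∀ (e : E) (a : A) (φ : a ⟶ d.obj e),
    ∃! p : Σ e' : E, e' ⟶ e,
      (∃ h : a = d.obj p.1, φ = eqToHom h ≫ d.map p.2) ∧ IsIdentityHom (c.map p.2)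
  lift_right : ∀ (e : E) (b : B) (ψ : c.obj e ⟶ b),
    ∃! p : Σ e' : E, e ⟶ e',
      (∃ h : c.obj p.1 = b, ψ = c.map p.2 ≫ eqToHom h) ∧ IsIdentityHom (d.map p.2)
  factor : ∀ {e₁ e₂ : E} (φ : e₁ ⟶ e₂),
    ∃ (e₃ : E) (u : e₁ ⟶ e₃) (v : e₃ ⟶ e₂),
      φ = u ≫ v ∧ IsIdentityHom (d.map u) ∧ IsIdentityHom (c.map v)

section Aux

variable {A : Type u₁} {E : Type u₂} {B : Type u₃}
    [Category.{v₁} A] [Category.{v₂} E] [Category.{v₃} B]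
    {d : E ⥤ A} {c : E ⥤ B}

lemma IsIdentityHom.comp {x y z : E} {φ : x ⟶ y} {φ' : y ⟶ z}
    (h : IsIdentityHom φ) (h' : IsIdentityHom φ') : IsIdentityHom (φ ≫ φ') := by
  obtain ⟨h1, rfl⟩ := h; obtain ⟨h2, rfl⟩ := h'
  exact ⟨h1.trans h2, by simp⟩

lemma isIdentityHom_id (x : E) : IsIdentityHom (𝟙 x) := ⟨rfl, by simp⟩

@[simp] lemma prod_id_eq {C : Type u₄} {D : Type u₅} [Category.{v₄} C]
    [Category.{v₅} D] (x : C × D) : 𝟙 x = (𝟙 x.1, 𝟙 x.2) := rfl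

@[simp] lemma eqToHom_prod {C : Type u₄} {D : Type u₅} [Category.{v₄} C]
    [Category.{v₅} D] {x y : C × D} (h : x = y) :
    eqToHom h = (eqToHom (congrArg Prod.fst h), eqToHom (congrArg Prod.snd h)) := by
  subst h; rfl

@[simp] lemma prod_eqToHom_fst {C : Type u₄} {D : Type u₅} [Category.{v₄} C]
    [Category.{v₅} D] {x y : C × D} (h : x = y) :
    (eqToHom h).1 = eqToHom (congrArg Prod.fst h) := by subst h; rfl

@[simp] lemma prod_eqToHom_snd {C : Type u₄} {D : Type u₅} [Category.{v₄} C]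
    [Category.{v₅} D] {x y : C × D} (h : x = y) :
    (eqToHom h).2 = eqToHom (congrArg Prod.snd h) := by subst h; rfl

lemma tsdf_hom_unique (h : IsTwoSidedDiscreteFibration d c) {x y : E} (m m' : x ⟶ y)
    (hd : d.map m = d.map m') (hc : c.map m = c.map m') : m = m' := by
  obtain ⟨w, u, v, hm, hdu, hcv⟩ := h.factor m
  obtain ⟨w', u', v', hm', hdu', hcv'⟩ := h.factor m'
  obtain ⟨hcv₁, hcv₂⟩ := hcv
  obtain ⟨hcv₁', hcv₂'⟩ := hcv'
  obtain ⟨pr, hpr, hprun⟩ := h.lift_right x (c.obj y) (c.map m)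
  have e1 : (⟨w, u⟩ : Σ e', x ⟶ e') = ⟨w', u'⟩ := by
    have a1 : (⟨w, u⟩ : Σ e', x ⟶ e') = pr :=
      hprun _ ⟨⟨hcv₁, by rw [hm]; simp [hcv₂]⟩, hdu⟩
    have a2 : (⟨w', u'⟩ : Σ e', x ⟶ e') = pr :=
      hprun _ ⟨⟨hcv₁', by rw [hc, hm']; simp [hcv₂']⟩, hdu'⟩
    rw [a1, a2]
  obtain ⟨hdu₁, hdu₂⟩ := hdu
  obtain ⟨hdu₁', hdu₂'⟩ := hdu'
  obtain ⟨pl, hpl, hplun⟩ := h.lift_left y (d.obj x) (d.map m)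
  have e2 : (⟨w, v⟩ : Σ e', e' ⟶ y) = ⟨w', v'⟩ := by
    have a1 : (⟨w, v⟩ : Σ e', e' ⟶ y) = pl :=
      hplun _ ⟨⟨hdu₁, by rw [hm]; simp [hdu₂]⟩, ⟨hcv₁, hcv₂⟩⟩
    have a2 : (⟨w', v'⟩ : Σ e', e' ⟶ y) = pl :=
      hplun _ ⟨⟨hdu₁', by rw [hd, hm']; simp [hdu₂']⟩, ⟨hcv₁', hcv₂'⟩⟩
    rw [a1, a2]
  injection e1 with k1 k2
  subst k1
  have hu : u = u' := eq_of_heq k2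
  injection e2 with k3 k4
  have hv : v = v' := k4
  rw [hm, hm', hu, hv]

lemma tsdf_hom_exists (h : IsTwoSidedDiscreteFibration d c) {x y x' : E}
    (r : x' ⟶ x) (t : x' ⟶ y) (p : d.obj x ⟶ d.obj y) (q : c.obj x ⟶ c.obj y)
    (hr : IsIdentityHom (d.map r)) (hq : c.map t = c.map r ≫ q)
    (hp : d.map t = d.map r ≫ p) :
    ∃ n : x ⟶ y, d.map n = p ∧ c.map n = q := by
  obtain ⟨w, u, v, ht, hdu, hcv⟩ := h.factor t
  obtain ⟨⟨w', u'⟩, ⟨⟨hq', hq''⟩, hdu'⟩, _⟩ := h.lift_right x (c.obj y) q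
  obtain ⟨⟨w'', v''⟩, ⟨⟨hp', hp''⟩, hcv''⟩, _⟩ := h.lift_left y (d.obj x) p
  obtain ⟨hr₁, hr₂⟩ := hr
  obtain ⟨hdu₁, hdu₂⟩ := hdu
  obtain ⟨hcv₁, hcv₂⟩ := hcv
  obtain ⟨hdu₁', hdu₂'⟩ := hdu'
  obtain ⟨hcv₁'', hcv₂''⟩ := hcv''
  obtain ⟨pr, hpr, hprun⟩ := h.lift_right x' (c.obj y) (c.map t)
  have e1 : (⟨w, u⟩ : Σ e', x' ⟶ e') = ⟨w', r ≫ u'⟩ := by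
    have a1 : (⟨w, u⟩ : Σ e', x' ⟶ e') = pr :=
      hprun _ ⟨⟨hcv₁, by rw [ht]; simp [hcv₂]⟩, ⟨hdu₁, hdu₂⟩⟩
    have a2 : (⟨w', r ≫ u'⟩ : Σ e', x' ⟶ e') = pr := by
      refine hprun _ ⟨⟨hq', ?_⟩, ?_⟩
      · show c.map t = c.map (r ≫ u') ≫ _
        rw [hq, hq'']; simp
      · show IsIdentityHom (d.map (r ≫ u'))
        rw [Functor.map_comp]
        exact IsIdentityHom.comp ⟨hr₁, hr₂⟩ ⟨hdu₁', hdu₂'⟩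
    rw [a1, a2]
  obtain ⟨pl, hpl, hplun⟩ := h.lift_left y (d.obj x') (d.map t)
  have e2 : (⟨w, v⟩ : Σ e', e' ⟶ y) = ⟨w'', v''⟩ := by
    have a1 : (⟨w, v⟩ : Σ e', e' ⟶ y) = pl :=
      hplun _ ⟨⟨hdu₁, by rw [ht]; simp [hdu₂]⟩, ⟨hcv₁, hcv₂⟩⟩
    have a2 : (⟨w'', v''⟩ : Σ e', e' ⟶ y) = pl := by
      refine hplun _ ⟨⟨hr₁.trans hp', ?_⟩, ⟨hcv₁'', hcv₂''⟩⟩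
      rw [hp, hp'']; simp [hr₂]
    rw [a1, a2]
  have ew : w' = w'' := by
    injection e1 with k1 _
    injection e2 with k2 _
    rw [← k1, ← k2]
  refine ⟨u' ≫ eqToHom ew ≫ v'', ?_, ?_⟩
  · rw [hp'']
    simp [hdu₂', eqToHom_map]
  · rw [hq'']
    simp [hcv₂'', eqToHom_map]

end Aux

section Statement19

variable {A : Type u₁} {B : Type u₂} {X : Type u₃} {Z : Type u₄} {E₁ : Type u₅} {E₂ : Type u}
variable [Category.{v₁} A] [Category.{v₂} B] [Category.{v₃} X]
variable [Category.{v₄} Z] [Category.{v₅} E₁] [Category.{v} E₂]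

/-- The canonical functor `i_f : A ⥤ f/B`, `a ↦ (a, f.obj a, identity)`. -/
def iF (f : A ⥤ B) : A ⥤ Comma f (𝟭 B) where
  obj a := { left := a, right := f.obj a, hom := 𝟙 (f.obj a) }
  map φ := { left := φ, right := f.map φ, w := by simp }

set_option maxHeartbeats 1000000 in
/-- Let `(d₁, E₁, c₁)` be a span from `X` to `Z` and `(d₂, E₂, c₂)` a
two-sided discrete fibration from `A × X` to `B × Z`.  Composition with the span morphism
`i_f × 𝟙 : f × E₁ ⟶ (f/B) × E₁` sends span morphisms `(f/B) × E₁ ⟶ E₂` to span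
morphisms `f × E₁ ⟶ E₂`, and this assignment is a bijection. -/
theorem stmt19 (f : A ⥤ B) (d₁ : E₁ ⥤ X) (c₁ : E₁ ⥤ Z)
    (d₂ : E₂ ⥤ A × X) (c₂ : E₂ ⥤ B × Z)
    (h₂ : IsTwoSidedDiscreteFibration d₂ c₂) :
    (∀ φ : Comma f (𝟭 B) × E₁ ⥤ E₂,
        (φ ⋙ d₂ = (Comma.fst f (𝟭 B)).prod d₁ ∧ φ ⋙ c₂ = (Comma.snd f (𝟭 B)).prod c₁) →
        (((iF f).prod (𝟭 E₁) ⋙ φ) ⋙ d₂ = (𝟭 A).prod d₁ ∧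
          ((iF f).prod (𝟭 E₁) ⋙ φ) ⋙ c₂ = f.prod c₁)) ∧
    (∀ ψ : A × E₁ ⥤ E₂,
        (ψ ⋙ d₂ = (𝟭 A).prod d₁ ∧ ψ ⋙ c₂ = f.prod c₁) →
        ∃! φ : Comma f (𝟭 B) × E₁ ⥤ E₂,
          (φ ⋙ d₂ = (Comma.fst f (𝟭 B)).prod d₁ ∧
            φ ⋙ c₂ = (Comma.snd f (𝟭 B)).prod c₁) ∧
          (iF f).prod (𝟭 E₁) ⋙ φ = ψ) := by
  constructor
  · rintro φ ⟨h1, h2⟩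
    constructor
    · rw [Functor.assoc, h1]; rfl
    · rw [Functor.assoc, h2]; rfl
  · rintro ψ ⟨hd, hc⟩
    classical
    have H := fun o : Comma f (𝟭 B) × E₁ =>
      h₂.lift_right (ψ.obj (o.1.left, o.2)) (o.1.right, c₁.obj o.2)
        (eqToHom (Functor.congr_obj hc (o.1.left, o.2)) ≫ (o.1.hom, 𝟙 (c₁.obj o.2)))
    choose P hP using H
    have hC : ∀ o, c₂.obj (P o).1 = (o.1.right, c₁.obj o.2) := fun o => (hP o).1.1.choose
    have hgρ : ∀ o, (eqToHom (Functor.congr_obj hc (o.1.left, o.2)) ≫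
        Prod.mkHom o.1.hom (𝟙 (c₁.obj o.2))) = c₂.map (P o).2 ≫ eqToHom (hC o) :=
      fun o => (hP o).1.1.choose_spec
    have hdρ : ∀ o, IsIdentityHom (d₂.map (P o).2) := fun o => (hP o).1.2
    have hDψ : ∀ o : Comma f (𝟭 B) × E₁,
        d₂.obj (ψ.obj (o.1.left, o.2)) = d₂.obj (P o).1 := fun o => (hdρ o).choose
    have hdρ' : ∀ o, d₂.map (P o).2 = eqToHom (hDψ o) := fun o => (hdρ o).choose_spec
    have hD : ∀ o : Comma f (𝟭 B) × E₁, d₂.obj (P o).1 = (o.1.left, d₁.obj o.2) :=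
      fun o => (hDψ o).symm.trans (Functor.congr_obj hd (o.1.left, o.2))
    have hcρ : ∀ o, c₂.map (P o).2 = eqToHom (Functor.congr_obj hc (o.1.left, o.2)) ≫
        Prod.mkHom o.1.hom (𝟙 (c₁.obj o.2)) ≫ eqToHom (hC o).symm := by
      intro o
      rw [← Category.assoc, hgρ o, Category.assoc, eqToHom_trans, eqToHom_refl,
        Category.comp_id]
    have key : ∀ (o₁ o₂ : Comma f (𝟭 B) × E₁) (m : o₁ ⟶ o₂),
        ∃! n : (P o₁).1 ⟶ (P o₂).1,
          d₂.map n = eqToHom (hD o₁) ≫ ((Comma.fst f (𝟭 B)).prod d₁).map m ≫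
            eqToHom (hD o₂).symm ∧
          c₂.map n = eqToHom (hC o₁) ≫ ((Comma.snd f (𝟭 B)).prod c₁).map m ≫
            eqToHom (hC o₂).symm := by
      intro o₁ o₂ m
      have hcψ := Functor.congr_hom hc (show (o₁.1.left, o₁.2) ⟶ (o₂.1.left, o₂.2) from
        (m.1.left, m.2))
      have hdψ := Functor.congr_hom hd (show (o₁.1.left, o₁.2) ⟶ (o₂.1.left, o₂.2) from
        (m.1.left, m.2))
      simp only [Functor.comp_map] at hcψ hdψ
      have hq : c₂.map (ψ.map (m.1.left, m.2) ≫ (P o₂).2) = c₂.map (P o₁).2 ≫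
          (eqToHom (hC o₁) ≫ ((Comma.snd f (𝟭 B)).prod c₁).map m ≫ eqToHom (hC o₂).symm) := by
        rw [Functor.map_comp, hcψ, hcρ o₁, hcρ o₂]
        simp only [Category.assoc, eqToHom_trans, eqToHom_trans_assoc, eqToHom_refl,
          Category.id_comp, Category.comp_id, Functor.prod_map, Functor.id_map]
        congr 1
        rw [← Category.assoc, ← Category.assoc]
        congr 1
        rw [prod_comp, prod_comp]
        exact Prod.ext (by simpa using m.1.w) (by simp)
      have hp : d₂.map (ψ.map (m.1.left, m.2) ≫ (P o₂).2) = d₂.map (P o₁).2 ≫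
          (eqToHom (hD o₁) ≫ ((Comma.fst f (𝟭 B)).prod d₁).map m ≫ eqToHom (hD o₂).symm) := by
        rw [Functor.map_comp, hdψ, hdρ' o₁, hdρ' o₂]
        simp only [Category.assoc, eqToHom_trans, eqToHom_trans_assoc, eqToHom_refl,
          Category.id_comp, Category.comp_id, Functor.prod_map, Functor.id_map]
        rfl
      obtain ⟨n, hn1, hn2⟩ := tsdf_hom_exists h₂ (P o₁).2 (ψ.map (m.1.left, m.2) ≫ (P o₂).2)
        (eqToHom (hD o₁) ≫ ((Comma.fst f (𝟭 B)).prod d₁).map m ≫ eqToHom (hD o₂).symm)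
        (eqToHom (hC o₁) ≫ ((Comma.snd f (𝟭 B)).prod c₁).map m ≫ eqToHom (hC o₂).symm)
        (hdρ o₁) hq hp
      exact ⟨n, ⟨hn1, hn2⟩, fun n' hn' => tsdf_hom_unique h₂ n' n
          (hn'.1.trans hn1.symm) (hn'.2.trans hn2.symm)⟩
    choose N hN using key
    refine ⟨{ obj := fun o => (P o).1, map := fun {o₁ o₂} m => N o₁ o₂ m,
              map_id := ?_, map_comp := ?_ }, ⟨⟨?_, ?_⟩, ?_⟩, ?_⟩
    · intro o
      exact ((hN o o (𝟙 o)).2 (𝟙 _) ⟨by simp; erw [Category.id_comp, eqToHom_trans, eqToHom_refl],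
        by simp; erw [Category.id_comp, eqToHom_trans, eqToHom_refl]⟩).symm
    · intro o₁ o₂ o₃ m m'
      refine ((hN o₁ o₃ (m ≫ m')).2 (N o₁ o₂ m ≫ N o₂ o₃ m') ⟨?_, ?_⟩).symm
      · rw [Functor.map_comp, (hN o₁ o₂ m).1.1, (hN o₂ o₃ m').1.1, Functor.map_comp]
        simp only [Category.assoc, eqToHom_trans_assoc, eqToHom_refl, Category.id_comp]
      · rw [Functor.map_comp, (hN o₁ o₂ m).1.2, (hN o₂ o₃ m').1.2, Functor.map_comp]
        simp only [Category.assoc, eqToHom_trans_assoc, eqToHom_refl, Category.id_comp]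
    · exact CategoryTheory.Functor.ext (fun o => hD o) (fun o₁ o₂ m => (hN o₁ o₂ m).1.1)
    · exact CategoryTheory.Functor.ext (fun o => hC o) (fun o₁ o₂ m => (hN o₁ o₂ m).1.2)
    · -- (iF f).prod (𝟭 E₁) ⋙ φ = ψ
      have hobj : ∀ x : A × E₁, (P ((iF f).obj x.1, x.2)).1 = ψ.obj x := by
        intro x
        have := (hP ((iF f).obj x.1, x.2)).2 ⟨ψ.obj x, 𝟙 _⟩
          ⟨⟨Functor.congr_obj hc x, by simp [iF]; exact eqToHom_prod _⟩,
            by dsimp only; erw [CategoryTheory.Functor.map_id]; exact isIdentityHom_id _⟩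
        exact (congrArg Sigma.fst this).symm
      refine CategoryTheory.Functor.ext (fun x => hobj x) (fun x y m => ?_)
      refine ((hN _ _ (((iF f).prod (𝟭 E₁)).map m)).2
        (eqToHom (hobj x) ≫ ψ.map m ≫ eqToHom (hobj y).symm) ⟨?_, ?_⟩).symm
      · have hdψ := Functor.congr_hom hd m
        simp only [Functor.comp_map] at hdψ
        rw [Functor.map_comp, Functor.map_comp, hdψ, eqToHom_map, eqToHom_map]
        simp [iF]
        repeat erw [eqToHom_fst]
        repeat erw [eqToHom_snd]
        simp
      · have hcψ := Functor.congr_hom hc m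
        simp only [Functor.comp_map] at hcψ
        rw [Functor.map_comp, Functor.map_comp, hcψ, eqToHom_map, eqToHom_map]
        simp [iF]
        repeat erw [eqToHom_fst]
        repeat erw [eqToHom_snd]
        simp
    · -- uniqueness
      rintro φ' ⟨⟨hd', hc'⟩, hψ'⟩
      have hobj : ∀ o : Comma f (𝟭 B) × E₁, φ'.obj o = (P o).1 := by
        intro o
        have hψobj : φ'.obj ((iF f).obj o.1.left, o.2) = ψ.obj (o.1.left, o.2) :=
          Functor.congr_obj hψ' (o.1.left, o.2)
        have hcm := Functor.congr_hom hc' (show ((iF f).obj o.1.left, o.2) ⟶ o from (⟨𝟙 o.1.left, o.1.hom, by simp [iF]⟩, 𝟙 o.2))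
        have hdm := Functor.congr_hom hd' (show ((iF f).obj o.1.left, o.2) ⟶ o from (⟨𝟙 o.1.left, o.1.hom, by simp [iF]⟩, 𝟙 o.2))
        simp only [Functor.comp_map] at hcm hdm
        have := (hP o).2 ⟨φ'.obj o, eqToHom hψobj.symm ≫ φ'.map (show ((iF f).obj o.1.left, o.2) ⟶ o from (⟨𝟙 o.1.left, o.1.hom, by simp [iF]⟩, 𝟙 o.2))⟩
          ⟨⟨Functor.congr_obj hc' o, ?_⟩, ?_⟩
        · exact congrArg Sigma.fst this
        · rw [Functor.map_comp, eqToHom_map, hcm]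
          simp [iF]
          repeat erw [eqToHom_fst]
          repeat erw [eqToHom_snd]
          simp
        · rw [Functor.map_comp, eqToHom_map, hdm]
          refine ⟨(Functor.congr_obj hd (o.1.left, o.2)).trans
            (Functor.congr_obj hd' o).symm, ?_⟩
          simp [iF]
          repeat erw [eqToHom_fst]
          repeat erw [eqToHom_snd]
          simp
          erw [Category.id_comp, eqToHom_trans]
      refine CategoryTheory.Functor.ext hobj (fun o₁ o₂ m => ?_)
      have hdm := Functor.congr_hom hd' m
      have hcm := Functor.congr_hom hc' m
      simp only [Functor.comp_map] at hdm hcm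
      refine tsdf_hom_unique h₂ _ _ ?_ ?_
      · rw [Functor.map_comp, Functor.map_comp, eqToHom_map, eqToHom_map, hdm,
          (hN o₁ o₂ m).1.1]
        simp
      · rw [Functor.map_comp, Functor.map_comp, eqToHom_map, eqToHom_map, hcm,
          (hN o₁ o₂ m).1.2]
        simp


end Statement19
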